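/- As τ → +∞ one has χ_τ(l) = (e^{τl}/2)(1 + Q(l)/(2τ)) + o(e^{τl}/τ); that is, τ e^{−τl} (χ_τ(l) − e^{τl}/2 − e^{τl} Q(l)/(4τ)) → 0 as τ → +∞. -/

import Mathlib

open Real MeasureTheory Filter intervalIntegral

lemma gronwall_cont {l c K : ℝ} (hK : 0 ≤ K) {g u : ℝ → ℝ}
    (hg : Continuous g) (hg0 : ∀ t, 0 ≤ g t) (hu : Continuous u)
    (h : ∀ x ∈ Set.Icc 0 l, u x ≤ c + K * ∫ t in (0:ℝ)..x, g t * u t) :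
    ∀ x ∈ Set.Icc 0 l, u x ≤ c * Real.exp (K * ∫ t in (0:ℝ)..x, g t) := by
  set φ : ℝ → ℝ := fun x => c + K * ∫ t in (0:ℝ)..x, g t * u t with hφ
  set A : ℝ → ℝ := fun x => ∫ t in (0:ℝ)..x, g t with hA
  have hφd : ∀ x, HasDerivAt φ (K * (g x * u x)) x := by
    intro x
    exact (((hg.mul hu).integral_hasStrictDerivAt 0 x).hasDerivAt.const_mul K).const_add c
  have hAd : ∀ x, HasDerivAt A (g x) x := fun x =>
    (hg.integral_hasStrictDerivAt 0 x).hasDerivAt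
  set F : ℝ → ℝ := fun x => φ x * Real.exp (-(K * A x)) with hF
  have hFd : ∀ x, HasDerivAt F
      (K * (g x * u x) * Real.exp (-(K * A x))
        + φ x * (Real.exp (-(K * A x)) * (-(K * g x)))) x := by
    intro x
    exact (hφd x).mul (((((hAd x).const_mul K).neg).exp))
  have hmono : AntitoneOn F (Set.Icc 0 l) := by
    apply antitoneOn_of_deriv_nonpos (convex_Icc 0 l)
    · exact Continuous.continuousOn
        (continuous_iff_continuousAt.2 fun x => (hFd x).differentiableAt.continuousAt)
    · intro x hx
      exact (hFd x).differentiableAt.differentiableWithinAt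
    · intro x hx
      rw [(hFd x).deriv]
      have hx' : x ∈ Set.Icc 0 l := interior_subset hx
      have h1 : u x ≤ φ x := h x hx'
      have hexp : 0 < Real.exp (-(K * A x)) := Real.exp_pos _
      nlinarith [mul_nonneg hK (hg0 x), mul_nonneg (mul_nonneg hK (hg0 x)) hexp.le]
  intro x hx
  have h0 : (0:ℝ) ∈ Set.Icc 0 l := ⟨le_refl _, hx.1.trans hx.2⟩
  have := hmono h0 hx hx.1
  have hF0 : F 0 = c := by simp [hF, hφ, hA]
  have hexp : 0 < Real.exp (-(K * A x)) := Real.exp_pos _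
  have h2 : φ x * Real.exp (-(K * A x)) ≤ c := by rw [← hF0]; exact this
  have h3 : φ x ≤ c * Real.exp (K * A x) := by
    have hmul : Real.exp (-(K * A x)) * Real.exp (K * A x) = 1 := by
      rw [← Real.exp_add]; simp
    have h4 := mul_le_mul_of_nonneg_right h2 (Real.exp_pos (K * A x)).le
    rwa [mul_assoc, hmul, mul_one] at h4
  exact (h x hx).trans h3

lemma gronwall_L1 {l c K : ℝ} (hl : 0 ≤ l) (hc : 0 ≤ c) (hK : 0 ≤ K) {f u : ℝ → ℝ}
    (hf : IntegrableOn f (Set.Icc 0 l)) (hf0 : ∀ t, 0 ≤ f t)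
    (hu : ContinuousOn u (Set.Icc 0 l)) (hu0 : ∀ x ∈ Set.Icc 0 l, 0 ≤ u x)
    (h : ∀ x ∈ Set.Icc 0 l, u x ≤ c + K * ∫ t in (0:ℝ)..x, f t * u t) :
    ∀ x ∈ Set.Icc 0 l, u x ≤ 2 * c * Real.exp (K * ((∫ t in (0:ℝ)..l, f t) + 1)) := by
  -- the clamp function
  set pc : ℝ → ℝ := fun x => min (max x 0) l with hpc
  have hpcmem : ∀ x, pc x ∈ Set.Icc 0 l := fun x =>
    ⟨le_min (le_max_right x 0) hl, min_le_right _ _⟩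
  have hpcid : ∀ x ∈ Set.Icc 0 l, pc x = x := by
    intro x hx; simp [hpc, max_eq_left hx.1, min_eq_left hx.2]
  have hpccont : Continuous pc := (continuous_id.max continuous_const).min continuous_const
  set v : ℝ → ℝ := fun x => u (pc x) with hv
  have hvcont : Continuous v := hu.comp_continuous hpccont hpcmem
  have hvu : ∀ x ∈ Set.Icc 0 l, v x = u x := fun x hx => by rw [hv]; simp [hpcid x hx]
  have hv0 : ∀ x, 0 ≤ v x := fun x => hu0 _ (hpcmem x)
  -- max of v on the interval
  obtain ⟨x₀, hx₀, hmax⟩ :=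
    (isCompact_Icc (a := (0:ℝ)) (b := l)).exists_isMaxOn (Set.nonempty_Icc.2 hl)
      hvcont.continuousOn
  set M : ℝ := v x₀ with hM
  have hM0 : 0 ≤ M := hv0 x₀
  have hMle : ∀ x ∈ Set.Icc 0 l, v x ≤ M := fun x hx => hmax hx
  -- constants
  set A : ℝ := ∫ t in (0:ℝ)..l, f t with hA
  set D : ℝ := Real.exp (K * (A + 1)) with hD
  have hD0 : 0 < D := Real.exp_pos _
  set ε : ℝ := min 1 (1 / (2 * (K * D) + 1)) with hε
  have hε0 : 0 < ε := lt_min one_pos (by positivity)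
  have hε1 : ε ≤ 1 := min_le_left _ _
  have hεKD : K * ε * D ≤ 1 / 2 := by
    have h1 : ε ≤ 1 / (2 * (K * D) + 1) := min_le_right _ _
    have h2 : 0 < 2 * (K * D) + 1 := by positivity
    rw [le_div_iff₀ h2] at h1
    nlinarith [mul_nonneg hK hD0.le]
  -- approximation
  set f₁ : ℝ → ℝ := Set.indicator (Set.Icc 0 l) f with hf₁
  have hf₁int : Integrable f₁ := (integrable_indicator_iff measurableSet_Icc).2 hf
  obtain ⟨g, hgsupp, hgnear, hgcont, hgint⟩ :=
    hf₁int.exists_hasCompactSupport_integral_sub_le hε0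
  set g' : ℝ → ℝ := fun t => |g t| with hg'
  have hg'cont : Continuous g' := hgcont.abs
  have hg'0 : ∀ t, 0 ≤ g' t := fun t => abs_nonneg _
  have hg'int : IntegrableOn g' (Set.Icc 0 l) := hg'cont.integrableOn_Icc
  have habs : IntegrableOn (fun t => |f t - g' t|) (Set.Icc 0 l) := (hf.sub hg'int).abs
  have habs2 : IntegrableOn (fun t => |f t - g t|) (Set.Icc 0 l) :=
    (hf.sub hgint.integrableOn).abs
  have hsub : ∀ x ∈ Set.Icc 0 l, Set.uIcc 0 x ⊆ Set.Icc 0 l := by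
    intro x hx
    rw [Set.uIcc_of_le hx.1]
    exact Set.Icc_subset_Icc le_rfl hx.2
  have hIoc : ∀ x ∈ Set.Icc 0 l, Set.Ioc 0 x ⊆ Set.Icc 0 l := fun x hx =>
    Set.Ioc_subset_Icc_self.trans (Set.Icc_subset_Icc le_rfl hx.2)
  -- step 1 : ∫₀ˣ |f - g'| ≤ ε
  have h₁ : ∀ x ∈ Set.Icc 0 l, (∫ t in (0:ℝ)..x, |f t - g' t|) ≤ ε := by
    intro x hx
    rw [intervalIntegral.integral_of_le hx.1]
    calc ∫ t in Set.Ioc 0 x, |f t - g' t|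
        ≤ ∫ t in Set.Ioc 0 x, |f t - g t| := by
          apply setIntegral_mono_on (habs.mono_set (hIoc x hx))
            (habs2.mono_set (hIoc x hx)) measurableSet_Ioc
          intro t _
          rw [hg']
          have h5 := abs_abs_sub_abs_le_abs_sub (f t) (g t)
          rw [abs_of_nonneg (hf0 t)] at h5
          exact h5
      _ ≤ ∫ t in Set.Icc 0 l, |f t - g t| := by
          apply setIntegral_mono_set habs2
            (Filter.Eventually.of_forall fun t => abs_nonneg _)
            (HasSubset.Subset.eventuallyLE (hIoc x hx))
      _ = ∫ t in Set.Icc 0 l, ‖f₁ t - g t‖ := by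
          apply setIntegral_congr_fun measurableSet_Icc
          intro t ht
          simp [hf₁, Set.indicator_of_mem ht, Real.norm_eq_abs]
      _ ≤ ∫ t, ‖f₁ t - g t‖ := setIntegral_le_integral (hf₁int.sub hgint).norm
            (Filter.Eventually.of_forall fun t => norm_nonneg _)
      _ ≤ ε := hgnear
  -- step 2 : ∫₀ˣ g' ≤ A + ε
  have h₂ : ∀ x ∈ Set.Icc 0 l, (∫ t in (0:ℝ)..x, g' t) ≤ A + ε := by
    intro x hx
    have hfabs : IntegrableOn (fun t => f t + |f t - g' t|) (Set.Icc 0 l) := hf.add habs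
    have e1 : (∫ t in (0:ℝ)..x, g' t) ≤ ∫ t in (0:ℝ)..x, f t + |f t - g' t| := by
      apply intervalIntegral.integral_mono_on hx.1
        ((hg'int.mono_set (hsub x hx)).intervalIntegrable)
        ((hfabs.mono_set (hsub x hx)).intervalIntegrable)
      intro t ht
      have : g' t - f t ≤ |f t - g' t| := by
        rw [abs_sub_comm]; exact le_abs_self _
      linarith
    have e2 : (∫ t in (0:ℝ)..x, f t + |f t - g' t|)
        = (∫ t in (0:ℝ)..x, f t) + ∫ t in (0:ℝ)..x, |f t - g' t| :=
      intervalIntegral.integral_add ((hf.mono_set (hsub x hx)).intervalIntegrable)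
        ((habs.mono_set (hsub x hx)).intervalIntegrable)
    have e3 : (∫ t in (0:ℝ)..x, f t) ≤ A := by
      rw [hA]
      apply intervalIntegral.integral_mono_interval le_rfl hx.1 hx.2
        (Filter.Eventually.of_forall fun t => hf0 t)
        ((hf.mono_set (hsub l ⟨hl, le_rfl⟩)).intervalIntegrable)
    have e4 := h₁ x hx
    linarith
  -- step 3 : Gronwall hypothesis for v with continuous g'
  have h₃ : ∀ x ∈ Set.Icc 0 l, v x ≤ (c + K * (ε * M)) + K * ∫ t in (0:ℝ)..x, g' t * v t := by
    intro x hx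
    have e0 : (∫ t in (0:ℝ)..x, f t * u t) = ∫ t in (0:ℝ)..x, f t * v t := by
      apply intervalIntegral.integral_congr
      intro t ht
      simp only []
      rw [hvu t (hsub x hx ht)]
    have e1 : (∫ t in (0:ℝ)..x, f t * v t)
        ≤ ∫ t in (0:ℝ)..x, g' t * v t + |f t - g' t| * M := by
      apply intervalIntegral.integral_mono_on hx.1
        (((hf.mono_set (hsub x hx)).intervalIntegrable).mul_continuousOn hvcont.continuousOn)
        ((((hg'cont.mul hvcont).intervalIntegrable 0 x)).add
          (((habs.mono_set (hsub x hx)).intervalIntegrable).mul_const M))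
      intro t ht
      have htl : t ∈ Set.Icc 0 l := hsub x hx (by
        rw [Set.uIcc_of_le hx.1]; exact ht)
      have hvM : v t ≤ M := hMle t htl
      have hvt0 : 0 ≤ v t := hv0 t
      have : (f t - g' t) * v t ≤ |f t - g' t| * M :=
        (mul_le_mul (le_abs_self _) hvM hvt0 (abs_nonneg _)).trans_eq' rfl
      show f t * v t ≤ g' t * v t + |f t - g' t| * M
      nlinarith
    have e2 : (∫ t in (0:ℝ)..x, g' t * v t + |f t - g' t| * M)
        = (∫ t in (0:ℝ)..x, g' t * v t) + (∫ t in (0:ℝ)..x, |f t - g' t|) * M := by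
      rw [intervalIntegral.integral_add (f := fun t => g' t * v t)
          ((hg'cont.mul hvcont).intervalIntegrable 0 x)
        (((habs.mono_set (hsub x hx)).intervalIntegrable).mul_const M),
        intervalIntegral.integral_mul_const]
    have e3 : (∫ t in (0:ℝ)..x, |f t - g' t|) * M ≤ ε * M :=
      mul_le_mul_of_nonneg_right (h₁ x hx) hM0
    have e4 := h x hx
    rw [← hvu x hx] at e4
    rw [e0] at e4
    nlinarith [mul_nonneg hK (sub_nonneg.2 e3)]
  -- apply the continuous Gronwall lemma
  have hgr := gronwall_cont hK hg'cont hg'0 hvcont h₃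
  -- bound M
  have hMbound : M ≤ 2 * c * D := by
    have b1 := hgr x₀ hx₀
    have b2 : Real.exp (K * ∫ t in (0:ℝ)..x₀, g' t) ≤ D := by
      rw [hD]
      apply Real.exp_le_exp.2
      apply mul_le_mul_of_nonneg_left _ hK
      have := h₂ x₀ hx₀
      linarith
    have hc' : 0 ≤ c + K * (ε * M) := by positivity
    have b3 : M ≤ (c + K * (ε * M)) * D := by
      calc M = v x₀ := rfl
        _ ≤ (c + K * (ε * M)) * Real.exp (K * ∫ t in (0:ℝ)..x₀, g' t) := b1
        _ ≤ (c + K * (ε * M)) * D := mul_le_mul_of_nonneg_left b2 hc'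
    have b4 : K * ε * D * M ≤ (1/2) * M := mul_le_mul_of_nonneg_right hεKD hM0
    nlinarith
  intro x hx
  calc u x = v x := (hvu x hx).symm
    _ ≤ M := hMle x hx
    _ ≤ 2 * c * D := hMbound

lemma psi_bound {l : ℝ} (hl : 0 < l) {q : ℝ → ℝ} (hq : IntegrableOn q (Set.Icc 0 l))
    {ψ : ℝ → ℝ} {τ : ℝ} (hτ : 1 ≤ τ) (hψc : ContinuousOn ψ (Set.Icc 0 l))
    (hψ : ∀ x ∈ Set.Icc 0 l, ψ x = Real.sinh (τ * x) / τ +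
        (1 / τ) * ∫ t in (0:ℝ)..x, Real.sinh (τ * (x - t)) * q t * ψ t) :
    ∀ x ∈ Set.Icc 0 l, |ψ x| ≤
      Real.exp ((1/2) * ((∫ t in (0:ℝ)..l, |q t|) + 1)) * Real.exp (τ * x) / τ := by
  have hτ0 : (0:ℝ) < τ := lt_of_lt_of_le one_pos hτ
  set u : ℝ → ℝ := fun t => τ * Real.exp (-(τ * t)) * |ψ t| with hu
  have hucont : ContinuousOn u (Set.Icc 0 l) := by
    apply ContinuousOn.mul _ hψc.abs
    exact (continuous_const.mul
      (Real.continuous_exp.comp (continuous_const.mul continuous_id).neg)).continuousOn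
  have hu0 : ∀ x ∈ Set.Icc 0 l, 0 ≤ u x := by
    intro x hx
    exact mul_nonneg (mul_nonneg hτ0.le (Real.exp_pos _).le) (abs_nonneg _)
  have hsub : ∀ x ∈ Set.Icc 0 l, Set.uIcc 0 x ⊆ Set.Icc 0 l := by
    intro x hx
    rw [Set.uIcc_of_le hx.1]
    exact Set.Icc_subset_Icc le_rfl hx.2
  have key : ∀ x ∈ Set.Icc 0 l, u x ≤ 1/2 + (1/2) * ∫ t in (0:ℝ)..x, |q t| * u t := by
    intro x hx
    have hqII : IntervalIntegrable q volume 0 x := (hq.mono_set (hsub x hx)).intervalIntegrable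
    have hψcx : ContinuousOn ψ (Set.uIcc 0 x) := hψc.mono (hsub x hx)
    have hS : Continuous (fun t => Real.sinh (τ * (x - t))) :=
      Real.continuous_sinh.comp (continuous_const.mul (continuous_const.sub continuous_id))
    have hJ : IntervalIntegrable (fun t => Real.sinh (τ * (x - t)) * q t * ψ t) volume 0 x := by
      have h1 := (hqII.continuousOn_mul hS.continuousOn).mul_continuousOn hψcx
      exact h1
    have hqu : IntervalIntegrable (fun t => |q t| * u t) volume 0 x :=
      hqII.abs.mul_continuousOn (hucont.mono (hsub x hx))
    have b1 : |∫ t in (0:ℝ)..x, Real.sinh (τ * (x - t)) * q t * ψ t|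
        ≤ ∫ t in (0:ℝ)..x, |Real.sinh (τ * (x - t)) * q t * ψ t| :=
      intervalIntegral.abs_integral_le_integral_abs hx.1
    have b2 : (∫ t in (0:ℝ)..x, |Real.sinh (τ * (x - t)) * q t * ψ t|)
        ≤ ∫ t in (0:ℝ)..x, (Real.exp (τ * x) / (2 * τ)) * (|q t| * u t) := by
      apply intervalIntegral.integral_mono_on hx.1 hJ.abs (hqu.const_mul _)
      intro t ht
      have h1 : 0 ≤ τ * (x - t) := mul_nonneg hτ0.le (sub_nonneg.2 ht.2)
      have h2 : |Real.sinh (τ * (x - t))| ≤ Real.exp (τ * (x - t)) / 2 := by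
        rw [abs_of_nonneg (Real.sinh_nonneg_iff.2 h1), Real.sinh_eq]
        have := (Real.exp_pos (-(τ * (x - t)))).le
        linarith
      calc |Real.sinh (τ * (x - t)) * q t * ψ t|
          = |Real.sinh (τ * (x - t))| * |q t| * |ψ t| := by rw [abs_mul, abs_mul]
        _ ≤ (Real.exp (τ * (x - t)) / 2) * |q t| * |ψ t| :=
            mul_le_mul_of_nonneg_right (mul_le_mul_of_nonneg_right h2 (abs_nonneg _))
              (abs_nonneg _)
        _ = (Real.exp (τ * x) / (2 * τ)) * (|q t| * u t) := by
            rw [hu]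
            have h3 : Real.exp (τ * (x - t)) = Real.exp (τ * x) * Real.exp (-(τ * t)) := by
              rw [← Real.exp_add]; ring_nf
            simp only []
            rw [h3]
            field_simp
    have b3 : (∫ t in (0:ℝ)..x, (Real.exp (τ * x) / (2 * τ)) * (|q t| * u t))
        = (Real.exp (τ * x) / (2 * τ)) * ∫ t in (0:ℝ)..x, |q t| * u t :=
      intervalIntegral.integral_const_mul _ _
    have hInn : 0 ≤ ∫ t in (0:ℝ)..x, |q t| * u t := by
      apply intervalIntegral.integral_nonneg hx.1
      intro t ht
      exact mul_nonneg (abs_nonneg _) (hu0 t ⟨ht.1, ht.2.trans hx.2⟩)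
    have hsinh : Real.exp (-(τ * x)) * Real.sinh (τ * x) ≤ 1/2 := by
      rw [Real.sinh_eq]
      have h4 : Real.exp (-(τ * x)) * Real.exp (τ * x) = 1 := by rw [← Real.exp_add]; simp
      nlinarith [sq_nonneg (Real.exp (-(τ * x)))]
    have hψx := hψ x hx
    have habs : |ψ x| ≤ Real.sinh (τ * x) / τ
        + (1 / τ) * |∫ t in (0:ℝ)..x, Real.sinh (τ * (x - t)) * q t * ψ t| := by
      rw [hψx]
      refine (abs_add_le _ _).trans ?_
      rw [abs_div, abs_of_nonneg (Real.sinh_nonneg_iff.2 (mul_nonneg hτ0.le hx.1)),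
        abs_of_pos hτ0, abs_mul, abs_of_pos (by positivity : (0:ℝ) < 1/τ)]
    -- assemble
    have hIabs : |∫ t in (0:ℝ)..x, Real.sinh (τ * (x - t)) * q t * ψ t|
        ≤ (Real.exp (τ * x) / (2 * τ)) * ∫ t in (0:ℝ)..x, |q t| * u t := by
      rw [← b3]; exact b1.trans b2
    have e4 : Real.exp (-(τ * x)) * Real.exp (τ * x) = 1 := by rw [← Real.exp_add]; simp
    have expx : 0 < Real.exp (-(τ * x)) := Real.exp_pos _
    have := mul_le_mul_of_nonneg_left (habs.trans (by
        exact add_le_add le_rfl (mul_le_mul_of_nonneg_left hIabs (by positivity))))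
      (mul_nonneg hτ0.le expx.le)
    calc u x = τ * Real.exp (-(τ * x)) * |ψ x| := rfl
      _ ≤ τ * Real.exp (-(τ * x)) * (Real.sinh (τ * x) / τ
          + (1 / τ) * ((Real.exp (τ * x) / (2 * τ)) * ∫ t in (0:ℝ)..x, |q t| * u t)) := this
      _ = Real.exp (-(τ * x)) * Real.sinh (τ * x)
          + (Real.exp (-(τ * x)) * Real.exp (τ * x)) * ((1 / (2 * τ)) *
            ∫ t in (0:ℝ)..x, |q t| * u t) := by field_simp
      _ ≤ 1/2 + (1/2) * ∫ t in (0:ℝ)..x, |q t| * u t := by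
          rw [e4, one_mul]
          have h6 : (1 / (2 * τ)) * (∫ t in (0:ℝ)..x, |q t| * u t)
              ≤ (1/2) * ∫ t in (0:ℝ)..x, |q t| * u t := by
            apply mul_le_mul_of_nonneg_right _ hInn
            rw [div_le_div_iff₀ (by positivity) (by norm_num)]
            nlinarith
          linarith
  have main := gronwall_L1 hl.le (by norm_num) (by norm_num) hq.abs
    (fun t => abs_nonneg _) hucont hu0 key
  intro x hx
  have h7 := main x hx
  have h8 : u x ≤ Real.exp ((1/2) * ((∫ t in (0:ℝ)..l, |q t|) + 1)) := by
    calc u x ≤ 2 * (1/2) * Real.exp ((1/2) * ((∫ t in (0:ℝ)..l, |q t|) + 1)) := h7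
      _ = Real.exp ((1/2) * ((∫ t in (0:ℝ)..l, |q t|) + 1)) := by ring
  have e4 : Real.exp (-(τ * x)) * Real.exp (τ * x) = 1 := by rw [← Real.exp_add]; simp
  have := mul_le_mul_of_nonneg_right h8 (le_of_lt (by positivity : (0:ℝ) < Real.exp (τ * x) / τ))
  calc |ψ x| = τ * Real.exp (-(τ * x)) * |ψ x| * (Real.exp (τ * x) / τ) := by
        field_simp
        linear_combination (-|ψ x|) * e4
    _ ≤ Real.exp ((1/2) * ((∫ t in (0:ℝ)..l, |q t|) + 1)) * (Real.exp (τ * x) / τ) := this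
    _ = Real.exp ((1/2) * ((∫ t in (0:ℝ)..l, |q t|) + 1)) * Real.exp (τ * x) / τ := by ring

lemma psi_diff_bound {l : ℝ} (hl : 0 < l) {q : ℝ → ℝ} (hq : IntegrableOn q (Set.Icc 0 l))
    {ψ : ℝ → ℝ} {τ : ℝ} (hτ : 1 ≤ τ) (hψc : ContinuousOn ψ (Set.Icc 0 l))
    (hψ : ∀ x ∈ Set.Icc 0 l, ψ x = Real.sinh (τ * x) / τ +
        (1 / τ) * ∫ t in (0:ℝ)..x, Real.sinh (τ * (x - t)) * q t * ψ t) :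
    ∀ x ∈ Set.Icc 0 l, |ψ x - Real.sinh (τ * x) / τ| ≤
      Real.exp ((1/2) * ((∫ t in (0:ℝ)..l, |q t|) + 1)) * (∫ t in (0:ℝ)..l, |q t|)
        * Real.exp (τ * x) / (2 * τ^2) := by
  have hτ0 : (0:ℝ) < τ := lt_of_lt_of_le one_pos hτ
  set Cq : ℝ := Real.exp ((1/2) * ((∫ t in (0:ℝ)..l, |q t|) + 1)) with hCq
  have hCq0 : 0 < Cq := Real.exp_pos _
  set A₁ : ℝ := ∫ t in (0:ℝ)..l, |q t| with hA₁
  have hbd := psi_bound hl hq hτ hψc hψ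
  have hsub : ∀ x ∈ Set.Icc 0 l, Set.uIcc 0 x ⊆ Set.Icc 0 l := by
    intro x hx
    rw [Set.uIcc_of_le hx.1]
    exact Set.Icc_subset_Icc le_rfl hx.2
  intro x hx
  have hqII : IntervalIntegrable q volume 0 x := (hq.mono_set (hsub x hx)).intervalIntegrable
  have hψcx : ContinuousOn ψ (Set.uIcc 0 x) := hψc.mono (hsub x hx)
  have hS : Continuous (fun t => Real.sinh (τ * (x - t))) :=
    Real.continuous_sinh.comp (continuous_const.mul (continuous_const.sub continuous_id))
  have hJ : IntervalIntegrable (fun t => Real.sinh (τ * (x - t)) * q t * ψ t) volume 0 x := by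
    have h1 := (hqII.continuousOn_mul hS.continuousOn).mul_continuousOn hψcx
    exact h1
  have b1 : |∫ t in (0:ℝ)..x, Real.sinh (τ * (x - t)) * q t * ψ t|
      ≤ ∫ t in (0:ℝ)..x, |Real.sinh (τ * (x - t)) * q t * ψ t| :=
    intervalIntegral.abs_integral_le_integral_abs hx.1
  have b2 : (∫ t in (0:ℝ)..x, |Real.sinh (τ * (x - t)) * q t * ψ t|)
      ≤ ∫ t in (0:ℝ)..x, (Cq * Real.exp (τ * x) / (2 * τ)) * |q t| := by
    apply intervalIntegral.integral_mono_on hx.1 hJ.abs (hqII.abs.const_mul _)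
    intro t ht
    have htl : t ∈ Set.Icc 0 l := ⟨ht.1, ht.2.trans hx.2⟩
    have h1 : 0 ≤ τ * (x - t) := mul_nonneg hτ0.le (sub_nonneg.2 ht.2)
    have h2 : |Real.sinh (τ * (x - t))| ≤ Real.exp (τ * (x - t)) / 2 := by
      rw [abs_of_nonneg (Real.sinh_nonneg_iff.2 h1), Real.sinh_eq]
      have := (Real.exp_pos (-(τ * (x - t)))).le
      linarith
    have h3 : |ψ t| ≤ Cq * Real.exp (τ * t) / τ := hbd t htl
    have h4 : Real.exp (τ * (x - t)) * Real.exp (τ * t) = Real.exp (τ * x) := by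
      rw [← Real.exp_add]; ring_nf
    calc |Real.sinh (τ * (x - t)) * q t * ψ t|
        = |Real.sinh (τ * (x - t))| * |q t| * |ψ t| := by rw [abs_mul, abs_mul]
      _ ≤ (Real.exp (τ * (x - t)) / 2) * |q t| * (Cq * Real.exp (τ * t) / τ) := by
          apply mul_le_mul (mul_le_mul_of_nonneg_right h2 (abs_nonneg _)) h3 (abs_nonneg _)
          positivity
      _ = (Cq * Real.exp (τ * x) / (2 * τ)) * |q t| := by
          rw [← h4]; field_simp
  have b3 : (∫ t in (0:ℝ)..x, (Cq * Real.exp (τ * x) / (2 * τ)) * |q t|)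
      = (Cq * Real.exp (τ * x) / (2 * τ)) * ∫ t in (0:ℝ)..x, |q t| :=
    intervalIntegral.integral_const_mul _ _
  have hqabsOn : IntegrableOn (fun t => |q t|) (Set.Icc 0 l) := hq.abs
  have b4 : (∫ t in (0:ℝ)..x, |q t|) ≤ A₁ := by
    apply intervalIntegral.integral_mono_interval le_rfl hx.1 hx.2
      (Filter.Eventually.of_forall fun t => abs_nonneg _)
      ((hqabsOn.mono_set (hsub l ⟨hl.le, le_rfl⟩)).intervalIntegrable)
  have hdiff : ψ x - Real.sinh (τ * x) / τ
      = (1 / τ) * ∫ t in (0:ℝ)..x, Real.sinh (τ * (x - t)) * q t * ψ t := by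
    rw [hψ x hx]; ring
  rw [hdiff, abs_mul, abs_of_pos (by positivity : (0:ℝ) < 1/τ)]
  calc (1/τ) * |∫ t in (0:ℝ)..x, Real.sinh (τ * (x - t)) * q t * ψ t|
      ≤ (1/τ) * ((Cq * Real.exp (τ * x) / (2 * τ)) * A₁) := by
        apply mul_le_mul_of_nonneg_left _ (by positivity)
        refine (b1.trans (b2.trans_eq b3)).trans ?_
        exact mul_le_mul_of_nonneg_left b4 (by positivity)
    _ = Cq * A₁ * Real.exp (τ * x) / (2 * τ^2) := by field_simp


/-- Two-term asymptotics of `χ_τ(l) = ψ_τ'(l)` for integrable `q`: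
`χ_τ(l) = (e^{τl}/2)(1 + Q(l)/(2τ)) + o(e^{τl}/τ)` as `τ → +∞`,
where `Q(l) = ∫₀ˡ q(t) dt`. -/
theorem psi_prime_endpoint_two_terms (l : ℝ) (hl : 0 < l) (q : ℝ → ℝ)
    (hq : IntegrableOn q (Set.Icc 0 l)) (ψ χ : ℝ → ℝ → ℝ)
    (hψcont : ∀ τ > (0:ℝ), ContinuousOn (ψ τ) (Set.Icc 0 l))
    (hψ : ∀ τ > (0:ℝ), ∀ x ∈ Set.Icc 0 l,
      ψ τ x = Real.sinh (τ * x) / τ +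
        (1 / τ) * ∫ t in (0:ℝ)..x, Real.sinh (τ * (x - t)) * q t * ψ τ t)
    (hχ : ∀ τ > (0:ℝ), ∀ x ∈ Set.Icc 0 l,
      χ τ x = Real.cosh (τ * x) +
        ∫ t in (0:ℝ)..x, Real.cosh (τ * (x - t)) * q t * ψ τ t) :
    Tendsto (fun τ : ℝ => τ * Real.exp (-(τ * l)) *
      (χ τ l - Real.exp (τ * l) / 2 -
        Real.exp (τ * l) * (∫ t in (0:ℝ)..l, q t) / (4 * τ)))
      atTop (nhds 0) := by
  set Q : ℝ := ∫ t in (0:ℝ)..l, q t with hQdef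
  set A₁ : ℝ := ∫ t in (0:ℝ)..l, |q t| with hA₁def
  set Cq : ℝ := Real.exp ((1/2) * (A₁ + 1)) with hCqdef
  have hA₁0 : 0 ≤ A₁ := intervalIntegral.integral_nonneg hl.le fun t _ => abs_nonneg _
  have hCq0 : 0 < Cq := Real.exp_pos _
  have hlmem : l ∈ Set.Icc 0 l := ⟨hl.le, le_rfl⟩
  have huIcc : Set.uIcc (0:ℝ) l = Set.Icc 0 l := Set.uIcc_of_le hl.le
  have hqII : IntervalIntegrable q volume 0 l := by
    apply IntegrableOn.intervalIntegrable
    rw [huIcc]; exact hq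
  have hqAbsII : IntervalIntegrable (fun t => |q t|) volume 0 l := hqII.abs
  -- the four pieces
  set e₁ : ℝ → ℝ := fun τ => τ * Real.exp (-(2*l*τ)) / 2 with he₁def
  set e₂ : ℝ → ℝ := fun τ => -(Q * Real.exp (-(2*l*τ)) / 4) with he₂def
  set e₃ : ℝ → ℝ := fun τ =>
    -(1/2) * ∫ t in (0:ℝ)..l, Real.exp (-(τ*l)) * (Real.sinh (τ*(l-2*t)) * q t) with he₃def
  set e₄ : ℝ → ℝ := fun τ => τ * Real.exp (-(τ*l)) *
    ∫ t in (0:ℝ)..l, Real.cosh (τ*(l-t)) * q t * (ψ τ t - Real.sinh (τ*t)/τ) with he₄def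
  -- decomposition
  have hdecomp : ∀ τ : ℝ, 1 ≤ τ →
      τ * Real.exp (-(τ * l)) * (χ τ l - Real.exp (τ * l) / 2 - Real.exp (τ * l) * Q / (4 * τ))
        = e₁ τ + e₂ τ + e₃ τ + e₄ τ := by
    intro τ hτ
    have hτ0 : (0:ℝ) < τ := lt_of_lt_of_le one_pos hτ
    have hψc := hψcont τ hτ0
    have hψτ := hψ τ hτ0
    have hχτ := hχ τ hτ0
    have hcoshC : Continuous (fun t => Real.cosh (τ*(l-t))) :=
      Real.continuous_cosh.comp (continuous_const.mul (continuous_const.sub continuous_id))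
    have hsinhC : Continuous (fun t => Real.sinh (τ*(l-2*t))) :=
      Real.continuous_sinh.comp (continuous_const.mul
        (continuous_const.sub (continuous_const.mul continuous_id)))
    have hsinh2C : Continuous (fun t => Real.sinh (τ*t)/τ) :=
      (Real.continuous_sinh.comp (continuous_const.mul continuous_id)).div_const τ
    -- integrability facts
    have hI1 : IntervalIntegrable (fun t => Real.cosh (τ*(l-t)) * q t * ψ τ t) volume 0 l := by
      have h1 := (hqII.continuousOn_mul hcoshC.continuousOn).mul_continuousOn
        (by rw [huIcc]; exact hψc)
      exact h1
    have hI2 : IntervalIntegrable (fun t => Real.cosh (τ*(l-t)) * q t * (Real.sinh (τ*t)/τ))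
        volume 0 l := by
      have h1 := (hqII.continuousOn_mul hcoshC.continuousOn).mul_continuousOn
        hsinh2C.continuousOn
      exact h1
    have hI3 : IntervalIntegrable
        (fun t => Real.cosh (τ*(l-t)) * q t * (ψ τ t - Real.sinh (τ*t)/τ)) volume 0 l := by
      have h1 := (hqII.continuousOn_mul hcoshC.continuousOn).mul_continuousOn
        (ContinuousOn.sub (by rw [huIcc]; exact hψc) hsinh2C.continuousOn)
      exact h1
    have hI4 : IntervalIntegrable (fun t => Real.sinh (τ*(l-2*t)) * q t) volume 0 l :=
      hqII.continuousOn_mul hsinhC.continuousOn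
    -- split the main integral
    have hsplit : (∫ t in (0:ℝ)..l, Real.cosh (τ*(l-t)) * q t * ψ τ t)
        = (∫ t in (0:ℝ)..l, Real.cosh (τ*(l-t)) * q t * (Real.sinh (τ*t)/τ))
          + ∫ t in (0:ℝ)..l, Real.cosh (τ*(l-t)) * q t * (ψ τ t - Real.sinh (τ*t)/τ) := by
      rw [← intervalIntegral.integral_add hI2 hI3]
      apply intervalIntegral.integral_congr
      intro t ht
      simp only []
      ring
    -- evaluate the first piece
    have hfirst : (∫ t in (0:ℝ)..l, Real.cosh (τ*(l-t)) * q t * (Real.sinh (τ*t)/τ))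
        = (Real.sinh (τ*l)/(2*τ)) * Q
          - (1/(2*τ)) * ∫ t in (0:ℝ)..l, Real.sinh (τ*(l-2*t)) * q t := by
      have hpt : ∀ t ∈ Set.uIcc (0:ℝ) l,
          Real.cosh (τ*(l-t)) * q t * (Real.sinh (τ*t)/τ)
            = (Real.sinh (τ*l)/(2*τ)) * q t - (1/(2*τ)) * (Real.sinh (τ*(l-2*t)) * q t) := by
        intro t _
        have h1 : Real.sinh (τ*(l-t) + τ*t) = Real.sinh (τ*(l-t)) * Real.cosh (τ*t)
            + Real.cosh (τ*(l-t)) * Real.sinh (τ*t) := Real.sinh_add _ _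
        have h2 : Real.sinh (τ*(l-t) - τ*t) = Real.sinh (τ*(l-t)) * Real.cosh (τ*t)
            - Real.cosh (τ*(l-t)) * Real.sinh (τ*t) := Real.sinh_sub _ _
        have e1 : τ*(l-t) + τ*t = τ*l := by ring
        have e2 : τ*(l-t) - τ*t = τ*(l-2*t) := by ring
        rw [e1] at h1
        rw [e2] at h2
        field_simp
        rw [show τ * (l - t * 2) = τ * (l - 2 * t) by ring]
        linear_combination (-q t) * (h1 - h2)
      rw [intervalIntegral.integral_congr hpt,
        intervalIntegral.integral_sub ((hqII.const_mul _)) (hI4.const_mul _),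
        intervalIntegral.integral_const_mul, intervalIntegral.integral_const_mul]
    -- exponential identities
    have E1 : Real.exp (-(τ*l)) * Real.exp (τ*l) = 1 := by rw [← Real.exp_add]; simp
    have E2 : Real.exp (-(τ*l)) * Real.exp (-(τ*l)) = Real.exp (-(2*l*τ)) := by
      rw [← Real.exp_add]; ring_nf
    have Ec : Real.exp (-(τ*l)) * Real.cosh (τ*l) = 1/2 + Real.exp (-(2*l*τ))/2 := by
      rw [Real.cosh_eq]
      linear_combination E1/2 + E2/2
    have Es : Real.exp (-(τ*l)) * Real.sinh (τ*l) = 1/2 - Real.exp (-(2*l*τ))/2 := by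
      rw [Real.sinh_eq]
      linear_combination E1/2 - E2/2
    have ES : Real.exp (-(τ*l)) * (∫ t in (0:ℝ)..l, Real.sinh (τ*(l-2*t)) * q t)
        = ∫ t in (0:ℝ)..l, Real.exp (-(τ*l)) * (Real.sinh (τ*(l-2*t)) * q t) :=
      (intervalIntegral.integral_const_mul _ _).symm
    -- assemble
    have hτne : τ ≠ 0 := ne_of_gt hτ0
    have hinv : τ * τ⁻¹ = 1 := mul_inv_cancel₀ hτne
    rw [hχτ l hlmem, hsplit, hfirst, he₁def, he₂def, he₃def, he₄def]
    simp only []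
    linear_combination (τ) * Ec + (Q/2) * Es - (1/2) * ES - (τ/2 + Q/4) * E1
      + ((Q/2) * (Real.exp (-(τ*l)) * Real.sinh (τ*l))
        - (1/2) * (Real.exp (-(τ*l)) * (∫ t in (0:ℝ)..l, Real.sinh (τ*(l-2*t)) * q t))
        - (Q/4) * (Real.exp (-(τ*l)) * Real.exp (τ*l))) * hinv
  -- limits of the four pieces
  have hlin : Tendsto (fun τ : ℝ => (2*l)*τ) atTop atTop :=
    Tendsto.const_mul_atTop (by positivity) tendsto_id
  have hT2 : Tendsto (fun τ : ℝ => Real.exp (-(2*l*τ))) atTop (nhds 0) := by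
    have h2 : Tendsto (fun τ : ℝ => -((2*l)*τ)) atTop atBot := tendsto_neg_atTop_atBot.comp hlin
    have h3 := Real.tendsto_exp_atBot.comp h2
    exact h3.congr fun τ => rfl
  have hT1 : Tendsto (fun τ : ℝ => τ * Real.exp (-(2*l*τ))) atTop (nhds 0) := by
    have h0 := Real.tendsto_pow_mul_exp_neg_atTop_nhds_zero 1
    have h1 := h0.comp hlin
    have h2 := h1.const_mul (1/(2*l))
    rw [mul_zero] at h2
    apply h2.congr
    intro τ
    simp only [Function.comp_apply, pow_one]
    have harg : -(2*l*τ) = -((2*l)*τ) := by ring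
    rw [harg]
    field_simp
  have hE1 : Tendsto e₁ atTop (nhds 0) := by
    rw [he₁def]
    simpa using hT1.div_const 2
  have hE2 : Tendsto e₂ atTop (nhds 0) := by
    rw [he₂def]
    have := ((hT2.const_mul Q).div_const 4).neg
    simpa using this
  have hE3 : Tendsto e₃ atTop (nhds 0) := by
    rw [he₃def]
    have hqm : AEStronglyMeasurable q (volume.restrict (Set.Ioc 0 l)) :=
      (hq.mono_set Set.Ioc_subset_Icc_self).aestronglyMeasurable
    have hDCT : Tendsto (fun τ : ℝ =>
        ∫ t in Set.Ioc (0:ℝ) l, Real.exp (-(τ*l)) * (Real.sinh (τ*(l-2*t)) * q t))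
        atTop (nhds 0) := by
      have hres : Tendsto (fun τ : ℝ =>
          ∫ t in Set.Ioc (0:ℝ) l, Real.exp (-(τ*l)) * (Real.sinh (τ*(l-2*t)) * q t))
          atTop (nhds (∫ t in Set.Ioc (0:ℝ) l, (0:ℝ))) := by
        apply MeasureTheory.tendsto_integral_filter_of_dominated_convergence
          (fun t => |q t|)
        · apply Filter.Eventually.of_forall
          intro τ
          exact ((Real.continuous_sinh.comp (continuous_const.mul
            (continuous_const.sub (continuous_const.mul continuous_id)))).aestronglyMeasurable.mul
            hqm).const_mul _
        · filter_upwards [eventually_ge_atTop (0:ℝ)] with τ hτ0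
          refine (ae_restrict_mem measurableSet_Ioc).mono ?_
          intro t ht
          have habs1 : |l - 2*t| ≤ l := by
            rw [abs_le]; constructor <;> [linarith [ht.2]; linarith [ht.1.le]]
          have h5 : |Real.sinh (τ*(l-2*t))| ≤ Real.exp (τ*l) / 2 := by
            rw [Real.abs_sinh, Real.sinh_eq]
            have h6 : |τ*(l-2*t)| ≤ τ*l := by
              rw [abs_mul, abs_of_nonneg hτ0]
              exact mul_le_mul_of_nonneg_left habs1 hτ0
            have h7 : Real.exp |τ*(l-2*t)| ≤ Real.exp (τ*l) := Real.exp_le_exp.2 h6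
            have h8 := (Real.exp_pos (-|τ*(l-2*t)|)).le
            linarith
          have E1 : Real.exp (-(τ*l)) * Real.exp (τ*l) = 1 := by rw [← Real.exp_add]; simp
          calc ‖Real.exp (-(τ*l)) * (Real.sinh (τ*(l-2*t)) * q t)‖
              = Real.exp (-(τ*l)) * (|Real.sinh (τ*(l-2*t))| * |q t|) := by
                rw [Real.norm_eq_abs, abs_mul, abs_mul, abs_of_pos (Real.exp_pos _)]
            _ ≤ Real.exp (-(τ*l)) * ((Real.exp (τ*l) / 2) * |q t|) := by
                apply mul_le_mul_of_nonneg_left _ (Real.exp_pos _).le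
                exact mul_le_mul_of_nonneg_right h5 (abs_nonneg _)
            _ = (1/2) * |q t| := by
                rw [show Real.exp (-(τ*l)) * ((Real.exp (τ*l) / 2) * |q t|)
                  = (Real.exp (-(τ*l)) * Real.exp (τ*l)) * (|q t|/2) by ring, E1]
                ring
            _ ≤ |q t| := by
                have := abs_nonneg (q t); linarith
        · exact (hq.mono_set Set.Ioc_subset_Icc_self).abs
        · have hsetae : volume.restrict (Set.Ioc (0:ℝ) l) = volume.restrict (Set.Ioo (0:ℝ) l) :=
            (Measure.restrict_congr_set Ioo_ae_eq_Ioc).symm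
          rw [hsetae]
          refine (ae_restrict_mem measurableSet_Ioo).mono ?_
          intro t ht
          have hc1 : (l - 2*t) - l < 0 := by linarith [ht.1]
          have hc2 : -(l - 2*t) - l < 0 := by linarith [ht.2]
          have key : ∀ τ : ℝ, Real.exp (-(τ*l)) * (Real.sinh (τ*(l-2*t)) * q t)
              = ((Real.exp (((l-2*t) - l)*τ) - Real.exp ((-(l-2*t) - l)*τ))/2) * q t := by
            intro τ
            rw [Real.sinh_eq]
            have a1 : Real.exp (-(τ*l)) * Real.exp (τ*(l-2*t)) = Real.exp (((l-2*t) - l)*τ) := by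
              rw [← Real.exp_add]; ring_nf
            have a2 : Real.exp (-(τ*l)) * Real.exp (-(τ*(l-2*t)))
                = Real.exp ((-(l-2*t) - l)*τ) := by
              rw [← Real.exp_add]; ring_nf
            linear_combination (q t/2) * a1 - (q t/2) * a2
          have hexp1 : Tendsto (fun τ : ℝ => Real.exp (((l-2*t) - l)*τ)) atTop (nhds 0) := by
            have hpos : 0 < -((l-2*t) - l) := by linarith
            have hlin2 : Tendsto (fun τ : ℝ => (-((l-2*t) - l))*τ) atTop atTop :=
              Tendsto.const_mul_atTop hpos tendsto_id
            have h2 : Tendsto (fun τ : ℝ => -((-((l-2*t) - l))*τ)) atTop atBot :=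
              tendsto_neg_atTop_atBot.comp hlin2
            have := Real.tendsto_exp_atBot.comp h2
            apply this.congr
            intro τ
            simp only [Function.comp]
            ring_nf
          have hexp2 : Tendsto (fun τ : ℝ => Real.exp ((-(l-2*t) - l)*τ)) atTop (nhds 0) := by
            have hpos : 0 < -(-(l-2*t) - l) := by linarith
            have hlin2 : Tendsto (fun τ : ℝ => (-(-(l-2*t) - l))*τ) atTop atTop :=
              Tendsto.const_mul_atTop hpos tendsto_id
            have h2 : Tendsto (fun τ : ℝ => -((-(-(l-2*t) - l))*τ)) atTop atBot :=
              tendsto_neg_atTop_atBot.comp hlin2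
            have := Real.tendsto_exp_atBot.comp h2
            apply this.congr
            intro τ
            simp only [Function.comp]
            ring_nf
          have hcomb := (((hexp1.sub hexp2).div_const 2).mul_const (q t))
          rw [show ((0:ℝ) - 0)/2 * q t = 0 by ring] at hcomb
          exact hcomb.congr (fun τ => (key τ).symm)
      simpa using hres
    have hDCT' : Tendsto (fun τ : ℝ =>
        ∫ t in (0:ℝ)..l, Real.exp (-(τ*l)) * (Real.sinh (τ*(l-2*t)) * q t))
        atTop (nhds 0) := by
      apply hDCT.congr
      intro τ
      rw [intervalIntegral.integral_of_le hl.le]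
    have := hDCT'.const_mul (-(1/2) : ℝ)
    simpa using this
  have hE4 : Tendsto e₄ atTop (nhds 0) := by
    apply squeeze_zero_norm' (a := fun τ => (Cq * A₁^2 / 2) * τ⁻¹)
    · filter_upwards [eventually_ge_atTop (1:ℝ)] with τ hτ
      have hτ0 : (0:ℝ) < τ := lt_of_lt_of_le one_pos hτ
      have hψc := hψcont τ hτ0
      have hdb := psi_diff_bound hl hq hτ hψc (hψ τ hτ0)
      have hcoshC : Continuous (fun t => Real.cosh (τ*(l-t))) :=
        Real.continuous_cosh.comp (continuous_const.mul (continuous_const.sub continuous_id))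
      have hsinh2C : Continuous (fun t => Real.sinh (τ*t)/τ) :=
        (Real.continuous_sinh.comp (continuous_const.mul continuous_id)).div_const τ
      have hI3 : IntervalIntegrable
          (fun t => Real.cosh (τ*(l-t)) * q t * (ψ τ t - Real.sinh (τ*t)/τ)) volume 0 l := by
        have h1 := (hqII.continuousOn_mul hcoshC.continuousOn).mul_continuousOn
          (ContinuousOn.sub (by rw [huIcc]; exact hψc) hsinh2C.continuousOn)
        exact h1
      have b1 : |∫ t in (0:ℝ)..l, Real.cosh (τ*(l-t)) * q t * (ψ τ t - Real.sinh (τ*t)/τ)|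
          ≤ ∫ t in (0:ℝ)..l, |Real.cosh (τ*(l-t)) * q t * (ψ τ t - Real.sinh (τ*t)/τ)| :=
        intervalIntegral.abs_integral_le_integral_abs hl.le
      have b2 : (∫ t in (0:ℝ)..l, |Real.cosh (τ*(l-t)) * q t * (ψ τ t - Real.sinh (τ*t)/τ)|)
          ≤ ∫ t in (0:ℝ)..l, (Cq * A₁ * Real.exp (τ*l) / (2*τ^2)) * |q t| := by
        apply intervalIntegral.integral_mono_on hl.le hI3.abs (hqAbsII.const_mul _)
        intro t ht
        have h1 : 0 ≤ τ*(l-t) := mul_nonneg hτ0.le (sub_nonneg.2 ht.2)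
        have h2 : Real.cosh (τ*(l-t)) ≤ Real.exp (τ*(l-t)) := by
          rw [Real.cosh_eq]
          have h3 : Real.exp (-(τ*(l-t))) ≤ Real.exp (τ*(l-t)) :=
            Real.exp_le_exp.2 (by linarith)
          linarith
        have h3 : |ψ τ t - Real.sinh (τ*t)/τ| ≤ Cq * A₁ * Real.exp (τ*t) / (2*τ^2) := hdb t ht
        have h4 : Real.exp (τ*(l-t)) * Real.exp (τ*t) = Real.exp (τ*l) := by
          rw [← Real.exp_add]; ring_nf
        calc |Real.cosh (τ*(l-t)) * q t * (ψ τ t - Real.sinh (τ*t)/τ)|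
            = Real.cosh (τ*(l-t)) * |q t| * |ψ τ t - Real.sinh (τ*t)/τ| := by
              rw [abs_mul, abs_mul, abs_of_pos (Real.cosh_pos _)]
          _ ≤ Real.exp (τ*(l-t)) * |q t| * (Cq * A₁ * Real.exp (τ*t) / (2*τ^2)) := by
              apply mul_le_mul (mul_le_mul_of_nonneg_right h2 (abs_nonneg _)) h3 (abs_nonneg _)
              positivity
          _ = (Cq * A₁ * Real.exp (τ*l) / (2*τ^2)) * |q t| := by
              rw [← h4]; field_simp
      have b3 : (∫ t in (0:ℝ)..l, (Cq * A₁ * Real.exp (τ*l) / (2*τ^2)) * |q t|)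
          = (Cq * A₁ * Real.exp (τ*l) / (2*τ^2)) * A₁ :=
        intervalIntegral.integral_const_mul _ _
      have E1 : Real.exp (-(τ*l)) * Real.exp (τ*l) = 1 := by rw [← Real.exp_add]; simp
      rw [he₄def]
      simp only []
      rw [Real.norm_eq_abs, abs_mul, abs_mul, abs_of_pos hτ0, abs_of_pos (Real.exp_pos _)]
      calc τ * Real.exp (-(τ*l)) *
            |∫ t in (0:ℝ)..l, Real.cosh (τ*(l-t)) * q t * (ψ τ t - Real.sinh (τ*t)/τ)|
          ≤ τ * Real.exp (-(τ*l)) * ((Cq * A₁ * Real.exp (τ*l) / (2*τ^2)) * A₁) := by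
            apply mul_le_mul_of_nonneg_left _ (by positivity)
            exact b1.trans (b2.trans_eq b3)
        _ = (Cq * A₁^2 / 2) * τ⁻¹ := by
            field_simp
            linear_combination (A₁^2) * E1
    · have := tendsto_inv_atTop_zero.const_mul (Cq * A₁^2 / 2)
      simpa using this
  have hsum : Tendsto (fun τ => e₁ τ + e₂ τ + e₃ τ + e₄ τ) atTop (nhds 0) := by
    have := ((hE1.add hE2).add hE3).add hE4
    simpa using this
  apply Tendsto.congr' _ hsum
  filter_upwards [eventually_ge_atTop (1:ℝ)] with τ hτ
  exact (hdecomp τ hτ).symm
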